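/- The permutation π_0 = (1,2)(3,4)⋯(2n-1,2n) is the unique Dumont derangement of the second kind on [2n] in which every pair (i, j) with 2 ≤ i < j ≤ 2n-1, i even and j odd, is in non-edge configuration. -/

import Mathlib

/-- A graph on vertex set `[n]` (vertices `Fin n` in increasing order) is terrain-like
if it satisfies the X-property. -/
def TerrainLike {n : ℕ} (G : SimpleGraph (Fin n)) : Prop :=
  ∀ a b c d : Fin n, a < b → b < c → c < d → G.Adj a c → G.Adj b d → G.Adj a d

/-- The order `⪯` on pairs `(a,b)` with `a < b`: `{a,b} ⪯ {c,d}` iff `c ≤ a < b ≤ d`. -/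
def PairLE {n : ℕ} (e f : Fin n × Fin n) : Prop :=
  f.1 ≤ e.1 ∧ e.2 ≤ f.2

/-- `τ({a,b})` is the transposition `(2a, 2b-1)` of `[2n]`; here vertices and the
elements of `[2n]` are 0-indexed, so it swaps the 0-based positions `2a+1` and `2b`. -/
def tau {n : ℕ} (e : Fin n × Fin n) : Equiv.Perm (Fin (2 * n)) :=
  Equiv.swap ⟨2 * e.1.val + 1, by have := e.1.isLt; omega⟩
    ⟨2 * e.2.val, by have := e.2.isLt; omega⟩

/-- `π₀ = (1,2)(3,4)⋯(2n-1,2n)` (0-indexed: swaps `2i` and `2i+1` for each `i < n`). -/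
def pi0 (n : ℕ) : Equiv.Perm (Fin (2 * n)) :=
  (List.ofFn (fun i : Fin n =>
    Equiv.swap ⟨2 * i.val, by have := i.isLt; omega⟩
      ⟨2 * i.val + 1, by have := i.isLt; omega⟩)).prod

/-- Dumont derangements of the second kind, on `Fin (2*n)` (0-indexed version of `[2n]`):
`π(2i-1) ≥ 2i-1`, `π(2i) < 2i` for `i ∈ [n]`, and `π(2i-1) > 2i-1` for `i ∈ [n-1]`. -/
def IsDumontDerangement {n : ℕ} (π : Equiv.Perm (Fin (2 * n))) : Prop :=
  (∀ i : Fin (2 * n), i.val % 2 = 0 → i.val ≤ (π i).val) ∧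
  (∀ i : Fin (2 * n), i.val % 2 = 1 → (π i).val < i.val) ∧
  (∀ i : Fin (2 * n), i.val % 2 = 0 → i.val < 2 * n - 2 → i.val < (π i).val)

/-- `i` and `j` are in edge configuration in `π` iff
`π⁻¹(i) < π⁻¹(j) ⟺ π⁻¹(i) ≡ π⁻¹(j) (mod 2)`. -/
def EdgeConfig {m : ℕ} (π : Equiv.Perm (Fin m)) (i j : Fin m) : Prop :=
  (π.symm i).val < (π.symm j).val ↔ (π.symm i).val % 2 = (π.symm j).val % 2

/-- A list `e₁ > ⋯ > e_m` of the edges of `G` (as pairs `(a,b)`, `a < b`), ordered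
descendingly with respect to a valid linear order (one extending `⪯`): no earlier
element is `⪯`-below a later one. -/
def ValidEdgeList {n : ℕ} (G : SimpleGraph (Fin n)) (l : List (Fin n × Fin n)) : Prop :=
  l.Nodup ∧ (∀ e : Fin n × Fin n, e ∈ l ↔ (e.1 < e.2 ∧ G.Adj e.1 e.2)) ∧
  l.Pairwise (fun e f => ¬ PairLE e f)

/-- `Π(G) = τ(e_m)⋯τ(e₁)π₀` for an edge list `[e₁,…,e_m]`. -/
def permOfList {n : ℕ} (l : List (Fin n × Fin n)) : Equiv.Perm (Fin (2 * n)) :=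
  (l.reverse.map tau).prod * pi0 n

lemma swap_prod_apply_val (m : ℕ) (nn : ℕ) : ∀ (_ : 2*nn ≤ m) (x : Fin m),
    (((List.ofFn (fun i : Fin nn => Equiv.swap (⟨2*i.val, by have := i.isLt; omega⟩ : Fin m)
        ⟨2*i.val+1, by have := i.isLt; omega⟩)).prod x).val)
    = if x.val < 2*nn then (if x.val % 2 = 0 then x.val + 1 else x.val - 1) else x.val := by
  induction nn with
  | zero => intro _ x; simp
  | succ nn ih =>
    intro h x
    rw [List.ofFn_succ']
    simp only [List.concat_eq_append, List.prod_append, List.prod_cons, List.prod_nil,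
      Fin.coe_castSucc, Fin.val_last, Equiv.Perm.mul_apply, mul_one, Equiv.Perm.one_def,
      Equiv.refl_apply]
    set a : Equiv.Perm (Fin m) := Equiv.swap (⟨2*nn, by omega⟩ : Fin m) ⟨2*nn+1, by omega⟩ with ha
    by_cases h1 : x.val = 2*nn
    · have hx : x = ⟨2*nn, by omega⟩ := Fin.ext h1
      have hax : a x = ⟨2*nn+1, by omega⟩ := by
        rw [hx, ha]; exact Equiv.swap_apply_left _ _
      rw [hax, ih (by omega)]
      simp only [Fin.val_mk]
      split_ifs <;> omega
    · by_cases h2 : x.val = 2*nn+1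
      · have hx : x = ⟨2*nn+1, by omega⟩ := Fin.ext h2
        have hax : a x = ⟨2*nn, by omega⟩ := by
          rw [hx, ha]; exact Equiv.swap_apply_right _ _
        rw [hax, ih (by omega)]
        simp only [Fin.val_mk]
        split_ifs <;> omega
      · have hax : a x = x := by
          rw [ha]; apply Equiv.swap_apply_of_ne_of_ne
          · intro hc; apply h1; rw [hc]
          · intro hc; apply h2; rw [hc]
        rw [hax, ih (by omega)]
        split_ifs <;> omega

lemma pi0_apply_val {n : ℕ} (x : Fin (2*n)) :
    ((pi0 n) x).val = if x.val % 2 = 0 then x.val + 1 else x.val - 1 := by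
  have h := swap_prod_apply_val (2*n) n le_rfl x
  rw [if_pos x.isLt] at h
  exact h

lemma pi0_symm_apply_val {n : ℕ} (x : Fin (2*n)) :
    ((pi0 n).symm x).val = if x.val % 2 = 0 then x.val + 1 else x.val - 1 := by
  have hinv : pi0 n (pi0 n x) = x := by
    apply Fin.ext
    have h1 := pi0_apply_val x
    have h2 := pi0_apply_val (pi0 n x)
    have hx := x.isLt
    split_ifs at h1 h2 <;> omega
  have hs : (pi0 n).symm x = pi0 n x := by
    rw [Equiv.symm_apply_eq]; exact hinv.symm
  rw [hs]; exact pi0_apply_val x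

/-- `π₀` is the unique Dumont derangement of the second kind in which every pair
`(i,j)` with `i` even, `j` odd (1-based; 0-indexed: `i.val` odd, `j.val` even), `i < j`,
is in non-edge configuration. -/
theorem pi0_unique_nonEdgeConfig {n : ℕ} :
    (IsDumontDerangement (pi0 n) ∧
      ∀ i j : Fin (2 * n), i.val % 2 = 1 → j.val % 2 = 0 → i < j →
        ¬ EdgeConfig (pi0 n) i j) ∧
    (∀ π : Equiv.Perm (Fin (2 * n)), IsDumontDerangement π →
      (∀ i j : Fin (2 * n), i.val % 2 = 1 → j.val % 2 = 0 → i < j → ¬ EdgeConfig π i j) →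
      π = pi0 n) := by
  constructor
  · constructor
    · refine ⟨?_, ?_, ?_⟩
      · intro i hi
        have h := pi0_apply_val i
        split_ifs at h <;> omega
      · intro i hi
        have h := pi0_apply_val i
        split_ifs at h <;> omega
      · intro i hi _
        have h := pi0_apply_val i
        split_ifs at h <;> omega
    · intro i j hi hj hij hEC
      unfold EdgeConfig at hEC
      have h1 := pi0_symm_apply_val i
      have h2 := pi0_symm_apply_val j
      have hij' : i.val < j.val := hij
      split_ifs at h1 h2 <;> omega
  · intro π hD hNE
    obtain ⟨hd1, hd2, hd3⟩ := hD
    have hinj : ∀ x y : Fin (2*n), (π x).val = (π y).val → x.val = y.val :=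
      fun x y h => congrArg Fin.val (π.injective (Fin.ext h))
    have key : ∀ k, 2*k+1 < 2*n → ∀ x : Fin (2*n),
        (x.val = 2*k → (π x).val = 2*k+1) ∧ (x.val = 2*k+1 → (π x).val = 2*k) := by
      intro k
      induction k using Nat.strong_induction_on with
      | _ k IH =>
      intro hk
      -- Step 1 : positions with value 2k+1 map to 2k
      have step1 : ∀ x : Fin (2*n), x.val = 2*k+1 → (π x).val = 2*k := by
        intro x hx
        have hlt : (π x).val < x.val := hd2 x (by omega)
        by_contra hne
        have hvlt : (π x).val < 2*k := by omega
        obtain ⟨j', hj'⟩ : ∃ j', (π x).val = 2*j' ∨ (π x).val = 2*j'+1 :=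
          ⟨(π x).val / 2, by omega⟩
        rcases hj' with hj' | hj'
        · have h := (IH j' (by omega) (by omega) (⟨2*j'+1, by omega⟩ : Fin (2*n))).2 rfl
          have := hinj x ⟨2*j'+1, by omega⟩ (by omega)
          simp only [Fin.val_mk] at this
          omega
        · have h := (IH j' (by omega) (by omega) (⟨2*j', by omega⟩ : Fin (2*n))).1 rfl
          have := hinj x ⟨2*j', by omega⟩ (by omega)
          simp only [Fin.val_mk] at this
          omega
      -- Step 2 : positions with value 2k map to 2k+1
      have step2 : ∀ x : Fin (2*n), x.val = 2*k → (π x).val = 2*k+1 := by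
        intro x hx
        set i : Fin (2*n) := ⟨2*k+1, hk⟩ with hidef
        set p : Fin (2*n) := π.symm i with hpdef
        have hπp : (π p).val = 2*k+1 := congrArg Fin.val (Equiv.apply_symm_apply π i)
        have hP2n : p.val < 2*n := p.isLt
        have hp2k : 2*k ≤ p.val := by
          by_contra hqs
          obtain ⟨j', hj'⟩ : ∃ j', p.val = 2*j' ∨ p.val = 2*j'+1 := ⟨p.val/2, by omega⟩
          rcases hj' with h' | h'
          · have := (IH j' (by omega) (by omega) p).1 h'; omega
          · have := (IH j' (by omega) (by omega) p).2 h'; omega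
        have hpne1 : p.val ≠ 2*k+1 := by
          intro hc; have := step1 p hc; omega
        have hpval : p.val = 2*k := by
          by_contra hpp
          -- p is at an odd position ≥ 2k+3
          have hpodd : p.val % 2 = 1 := by
            by_contra hpe
            have := hd1 p (by omega)
            omega
          have hpge : 2*k+3 ≤ p.val := by omega
          obtain ⟨d, hd⟩ : ∃ d, p.val = 2*k+3+2*d := ⟨(p.val - (2*k+3))/2, by omega⟩
          have hkn : k + 2 ≤ n := by omega
          set T := n - k - 2 with hT
          set g : ℕ → ℕ := fun t => if t < d then 2*k+3+2*t else p.val+1+2*(t-d) with hg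
          set F : ℕ → ℕ := fun j => if hj : j < 2*n then (π.symm ⟨j, hj⟩).val else 0 with hF
          set A : Finset ℕ := (Finset.range (2*n)).filter (fun j => j % 2 = 0 ∧ 2*k+2 ≤ j)
            with hA
          set B : Finset ℕ := (Finset.range T).image g with hB
          have hcard1 : (Finset.range (n-k-1)).card ≤ A.card := by
            apply Finset.card_le_card_of_injOn (fun t => 2*k+2+2*t)
            · intro t ht
              simp only [Finset.mem_coe, Finset.mem_range] at ht
              simp only [Finset.mem_coe, hA, Finset.mem_filter, Finset.mem_range]
              omega
            · intro t1 _ t2 _ h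
              have h' : 2*k+2+2*t1 = 2*k+2+2*t2 := h
              omega
          have hcard2 : A.card ≤ B.card := by
            apply Finset.card_le_card_of_injOn F
            · intro j hj
              simp only [Finset.mem_coe, hA, Finset.mem_filter, Finset.mem_range] at hj
              obtain ⟨hjlt, hjeven, hjge⟩ := hj
              have hqF : F j = (π.symm ⟨j, hjlt⟩).val := dif_pos hjlt
              set q := (π.symm (⟨j, hjlt⟩ : Fin (2*n))) with hqdef
              have hπqval : (π q).val = j := congrArg Fin.val
                (Equiv.apply_symm_apply π (⟨j, hjlt⟩ : Fin (2*n)))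
              have hq2n : q.val < 2*n := q.isLt
              have hq2k : 2*k ≤ q.val := by
                by_contra hqs
                obtain ⟨j', hj'⟩ : ∃ j', q.val = 2*j' ∨ q.val = 2*j'+1 := ⟨q.val/2, by omega⟩
                rcases hj' with h' | h'
                · have := (IH j' (by omega) (by omega) q).1 h'; omega
                · have := (IH j' (by omega) (by omega) q).2 h'; omega
              have hqne : q.val ≠ 2*k+1 := by
                intro hc; have := step1 q hc; omega
              have hqnp : q.val ≠ p.val := by
                intro hc
                have : q = p := Fin.ext hc
                rw [this] at hπqval
                omega
              have hne := hNE i ⟨j, hjlt⟩ (by show (2*k+1) % 2 = 1; omega)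
                (by show j % 2 = 0; exact hjeven) (by show 2*k+1 < j; omega)
              unfold EdgeConfig at hne
              have hne' : ¬ (p.val < q.val ↔ p.val % 2 = q.val % 2) := hne
              have hiff : p.val < q.val ↔ q.val % 2 = 0 := by omega
              rw [hqF]
              simp only [Finset.mem_coe, hB, Finset.mem_image, Finset.mem_range]
              by_cases hqpar : q.val % 2 = 0
              · have hPq : p.val < q.val := hiff.mpr hqpar
                obtain ⟨s, hs⟩ : ∃ s, q.val = p.val+1+2*s := ⟨(q.val - p.val - 1)/2, by omega⟩
                refine ⟨d+s, by omega, ?_⟩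
                simp only [hg]
                rw [if_neg (by omega)]
                omega
              · have hnPq : ¬ (p.val < q.val) := fun hc => by have := hiff.mp hc; omega
                obtain ⟨t, ht⟩ : ∃ t, q.val = 2*k+3+2*t := ⟨(q.val - (2*k+3))/2, by omega⟩
                refine ⟨t, by omega, ?_⟩
                simp only [hg]
                rw [if_pos (by omega)]
                omega
            · intro j1 hj1 j2 hj2 heq
              simp only [Finset.mem_coe, hA, Finset.mem_filter, Finset.mem_range] at hj1 hj2
              have h1 : j1 < 2*n := hj1.1
              have h2 : j2 < 2*n := hj2.1
              have heq' : (π.symm ⟨j1, h1⟩).val = (π.symm ⟨j2, h2⟩).val := by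
                rw [hF] at heq
                simpa [dif_pos h1, dif_pos h2] using heq
              have h3 : (⟨j1, h1⟩ : Fin (2*n)) = ⟨j2, h2⟩ := π.symm.injective (Fin.ext heq')
              simpa using h3
          have hcard3 : B.card ≤ T :=
            le_trans Finset.card_image_le (le_of_eq (Finset.card_range T))
          rw [Finset.card_range] at hcard1
          omega
        -- conclude
        have hxp : x = p := Fin.ext (by omega)
        rw [hxp]
        exact hπp
      intro x
      exact ⟨step2 x, step1 x⟩
    apply Equiv.ext
    intro x
    have hp0 := pi0_apply_val x
    obtain ⟨kk, hkk⟩ : ∃ kk, x.val = 2*kk ∨ x.val = 2*kk+1 := ⟨x.val/2, by omega⟩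
    have hkkn : 2*kk+1 < 2*n := by have := x.isLt; omega
    apply Fin.ext
    rcases hkk with h | h
    · have := (key kk hkkn x).1 h
      split_ifs at hp0 <;> omega
    · have := (key kk hkkn x).2 h
      split_ifs at hp0 <;> omega
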